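/- Let V be a complex inner product space, r a vector with ‖r‖ = f₀, and suppose f₀ > f₁ ≥ 0. Let y be a unit vector orthogonal to r, set c = √(f₀² - f₁²)/f₀, w = c • (f₀⁻¹ • r) + √(1 - c²) • y, and r' = r - ⟪r, w⟫ • w. Then ‖r'‖ = f₁. -/

import Mathlib

open scoped InnerProductSpace

theorem stmt3 {V : Type*} [NormedAddCommGroup V] [InnerProductSpace ℂ V]
    (f₀ f₁ : ℝ) (h01 : f₀ > f₁) (h1 : f₁ ≥ 0)
    (r y : V) (hr : ‖r‖ = f₀) (hy : ‖y‖ = 1) (hry : ⟪r, y⟫_ℂ = 0)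
    (c : ℝ) (hc : c = Real.sqrt (f₀ ^ 2 - f₁ ^ 2) / f₀)
    (w : V) (hw : w = (c : ℂ) • ((f₀ : ℂ)⁻¹ • r) + ((Real.sqrt (1 - c ^ 2) : ℝ) : ℂ) • y)
    (r' : V) (hr' : r' = r - ⟪w, r⟫_ℂ • w) :
    ‖r'‖ = f₁ := by
  have hf0 : (0:ℝ) < f₀ := lt_of_le_of_lt h1 h01
  have hf0' : (f₀:ℝ) ≠ 0 := ne_of_gt hf0
  have hf0C : (f₀:ℂ) ≠ 0 := by exact_mod_cast hf0'
  have hsub : (0:ℝ) ≤ f₀ ^ 2 - f₁ ^ 2 := by nlinarith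
  have hc2 : c ^ 2 = (f₀ ^ 2 - f₁ ^ 2) / f₀ ^ 2 := by
    rw [hc, div_pow, Real.sq_sqrt hsub]
  have hc2' : c ^ 2 * f₀ ^ 2 = f₀ ^ 2 - f₁ ^ 2 := by
    rw [hc2]; field_simp
  have h1c : 1 - c ^ 2 = f₁ ^ 2 / f₀ ^ 2 := by
    rw [hc2]; field_simp; ring
  have hs : Real.sqrt (1 - c ^ 2) = f₁ / f₀ := by
    rw [h1c, Real.sqrt_div (sq_nonneg f₁), Real.sqrt_sq h1, Real.sqrt_sq hf0.le]
  have hyr : ⟪y, r⟫_ℂ = 0 := by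
    rw [← inner_conj_symm, hry, map_zero]
  have hrr : ⟪r, r⟫_ℂ = ((f₀ ^ 2 : ℝ) : ℂ) := by
    rw [inner_self_eq_norm_sq_to_K, hr]; norm_cast
  have hwr : ⟪w, r⟫_ℂ = ((c * f₀ : ℝ) : ℂ) := by
    rw [hw, inner_add_left, inner_smul_left, inner_smul_left, inner_smul_left,
      hyr, hrr]
    simp only [Complex.conj_ofReal, map_inv₀]
    push_cast
    field_simp
    ring
  have hc2C : (c:ℂ) ^ 2 * (f₀:ℂ) ^ 2 = (f₀:ℂ) ^ 2 - (f₁:ℂ) ^ 2 := by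
    exact_mod_cast hc2'
  have hr'2 : r' = ((f₁ ^ 2 / f₀ ^ 2 : ℝ) : ℂ) • r - ((c * f₁ : ℝ) : ℂ) • y := by
    rw [hr', hwr, hw, hs]
    match_scalars
    · field_simp
      linear_combination (-1:ℂ) * hc2C
    · field_simp
  have hinner0 : ⟪((f₁ ^ 2 / f₀ ^ 2 : ℝ) : ℂ) • r, ((c * f₁ : ℝ) : ℂ) • y⟫_ℂ = 0 := by
    simp [inner_smul_left, inner_smul_right, hry]
  have hn : ‖r'‖ ^ 2 = f₁ ^ 2 := by
    rw [hr'2, @norm_sub_sq ℂ, hinner0]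
    simp only [map_zero, mul_zero, sub_zero, norm_smul, Complex.norm_real, hr, hy, mul_one,
      Real.norm_eq_abs]
    rw [mul_pow, sq_abs, sq_abs, div_pow]
    field_simp
    linear_combination f₁ ^ 2 * hc2'
  nlinarith [norm_nonneg r', hn]
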